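/- arXiv:2403.12648 — 4 statements merged into one kernel-verified Lean document; each statement's English description precedes it below -/
import Mathlib

section
/- Let SP(v) denote the number of pushback operations performed on node v during a run of ApproxContributions(t, α, ε). Then SP(v) ≤ π(v,t)/(α·ε) for every v, and hence the total number of pushback operations is at most n·π(t)/(α·ε). -/
open Finset

variable {V : Type*}

/-- Out-neighbors of `v` in the directed graph with edge relation `E`. -/
def outNbrs [Fintype V] (E : V → V → Prop) [DecidableRel E] (v : V) : Finset V :=
  Finset.univ.filter fun w => E v w

/-- In-neighbors of `v`. -/
def inNbrs [Fintype V] (E : V → V → Prop) [DecidableRel E] (v : V) : Finset V :=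
  Finset.univ.filter fun u => E u v

/-- Out-degree. -/
def doutd [Fintype V] (E : V → V → Prop) [DecidableRel E] (v : V) : ℕ := (outNbrs E v).card

/-- In-degree. -/
def dind [Fintype V] (E : V → V → Prop) [DecidableRel E] (v : V) : ℕ := (inNbrs E v).card

/-- Random-walk transition matrix: from `u`, move to a uniformly random out-neighbor. -/
noncomputable def transMat [Fintype V] (E : V → V → Prop) [DecidableRel E] : Matrix V V ℝ :=
  Matrix.of fun u v => if E u v then (1 : ℝ) / doutd E u else 0

/-- Personalized PageRank `π(u,t)`: probability that an `α`-discounted random walk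
(length `ℓ` with probability `α(1-α)^ℓ`) started at `u` terminates at `t`. -/
noncomputable def ppr [Fintype V] [DecidableEq V] (α : ℝ) (E : V → V → Prop) [DecidableRel E]
    (u t : V) : ℝ :=
  ∑' ℓ : ℕ, α * (1 - α) ^ ℓ * (transMat E ^ ℓ) u t

/-- PageRank `π(t)`: probability that an `α`-discounted random walk started at a uniformly
random node terminates at `t`. -/
noncomputable def pgrk [Fintype V] [DecidableEq V] (α : ℝ) (E : V → V → Prop) [DecidableRel E]
    (t : V) : ℝ :=
  (1 / (Fintype.card V : ℝ)) * ∑ u : V, ppr α E u t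

/-- The pushback operation of `ApproxContributions` on node `v`: the state is a pair
(reserves, residues); `α·r(v)` is added to the reserve of `v`, `(1-α)·r(v)/d_out(u)` is
added to the residue of every in-neighbor `u` of `v`, and the residue of `v` is zeroed. -/
noncomputable def pushback [Fintype V] [DecidableEq V] (α : ℝ) (E : V → V → Prop)
    [DecidableRel E] (s : (V → ℝ) × (V → ℝ)) (v : V) : (V → ℝ) × (V → ℝ) :=
  (Function.update s.1 v (s.1 v + α * s.2 v),
   fun w => if w = v then 0
            else s.2 w + (if E w v then (1 - α) * s.2 v / (doutd E w : ℝ) else 0))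

/-- Initial state of `ApproxContributions(t, α, ε)`: zero reserves, residue 1 at `t`. -/
noncomputable def initState [DecidableEq V] (t : V) : (V → ℝ) × (V → ℝ) :=
  (fun _ => 0, fun w => if w = t then (1 : ℝ) else 0)

section Helpers
set_option linter.unusedSectionVars false

variable [Fintype V] [DecidableEq V] (E : V → V → Prop) [DecidableRel E]

lemma transMat_nonneg (u v : V) : 0 ≤ transMat E u v := by
  simp only [transMat, Matrix.of_apply]
  split <;> positivity

lemma transMat_rowsum (hpos : ∀ v : V, 0 < doutd E v) (u : V) :
    ∑ v, transMat E u v = 1 := by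
  have hd : ((doutd E u : ℝ)) ≠ 0 := by
    exact_mod_cast (hpos u).ne'
  simp only [transMat, Matrix.of_apply]
  rw [← Finset.sum_filter, Finset.sum_const]
  show ((outNbrs E u).card : ℕ) • ((1:ℝ) / (doutd E u : ℝ)) = 1
  rw [nsmul_eq_mul]
  show ((doutd E u : ℝ)) * _ = 1
  field_simp

lemma transMat_pow_nonneg (n : ℕ) (u v : V) : 0 ≤ (transMat E ^ n) u v := by
  induction n generalizing u v with
  | zero => simp only [pow_zero, Matrix.one_apply]; split <;> norm_num
  | succ n ih =>
    rw [pow_succ, Matrix.mul_apply]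
    exact Finset.sum_nonneg fun w _ => mul_nonneg (ih u w) (transMat_nonneg E w v)

lemma transMat_pow_rowsum (hpos : ∀ v : V, 0 < doutd E v) (n : ℕ) (u : V) :
    ∑ v, (transMat E ^ n) u v = 1 := by
  induction n with
  | zero => simp [Matrix.one_apply]
  | succ n ih =>
    simp only [pow_succ, Matrix.mul_apply]
    rw [Finset.sum_comm]
    simp_rw [← Finset.mul_sum, transMat_rowsum E hpos, mul_one]
    exact ih

lemma transMat_pow_le_one (hpos : ∀ v : V, 0 < doutd E v) (n : ℕ) (u v : V) :
    (transMat E ^ n) u v ≤ 1 := by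
  calc (transMat E ^ n) u v ≤ ∑ w, (transMat E ^ n) u w :=
        Finset.single_le_sum (fun w _ => transMat_pow_nonneg E n u w) (Finset.mem_univ v)
    _ = 1 := transMat_pow_rowsum E hpos n u

lemma summable_ppr {α : ℝ} (hα : α ∈ Set.Ioo (0:ℝ) 1) (hpos : ∀ v : V, 0 < doutd E v)
    (u v : V) : Summable (fun ℓ : ℕ => α * (1 - α) ^ ℓ * (transMat E ^ ℓ) u v) := by
  have h1 : (0:ℝ) ≤ 1 - α := by linarith [hα.2]
  apply Summable.of_nonneg_of_le
    (fun ℓ => mul_nonneg (mul_nonneg hα.1.le (pow_nonneg h1 ℓ)) (transMat_pow_nonneg E ℓ u v))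
    (fun ℓ => ?_)
    ((summable_geometric_of_lt_one h1 (by linarith [hα.1])).mul_left α)
  exact mul_le_of_le_one_right (mul_nonneg hα.1.le (pow_nonneg h1 ℓ))
    (transMat_pow_le_one E hpos ℓ u v)

lemma ppr_nonneg {α : ℝ} (hα : α ∈ Set.Ioo (0:ℝ) 1) (u v : V) : 0 ≤ ppr α E u v := by
  have h1 : (0:ℝ) ≤ 1 - α := by linarith [hα.2]
  exact tsum_nonneg fun ℓ =>
    mul_nonneg (mul_nonneg hα.1.le (pow_nonneg h1 ℓ)) (transMat_pow_nonneg E ℓ u v)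

lemma ppr_rec {α : ℝ} (hα : α ∈ Set.Ioo (0:ℝ) 1) (hpos : ∀ v : V, 0 < doutd E v)
    (v x : V) :
    ppr α E v x = α * (if v = x then 1 else 0)
      + (1 - α) * ∑ w ∈ inNbrs E x, ppr α E v w / (doutd E w : ℝ) := by
  unfold ppr
  rw [Summable.tsum_eq_zero_add (summable_ppr E hα hpos v x)]
  congr 1
  · simp [Matrix.one_apply]
  · have hstep : ∀ ℓ : ℕ, α * (1 - α) ^ (ℓ + 1) * (transMat E ^ (ℓ + 1)) v x
        = ∑ w, (α * (1 - α) ^ ℓ * (transMat E ^ ℓ) v w) * ((1 - α) * transMat E w x) := by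
      intro ℓ
      rw [pow_succ (transMat E), Matrix.mul_apply, Finset.mul_sum]
      refine Finset.sum_congr rfl fun w _ => by ring
    simp_rw [hstep]
    rw [Summable.tsum_finsetSum (fun w _ => (summable_ppr E hα hpos v w).mul_right _)]
    simp_rw [tsum_mul_right]
    rw [Finset.mul_sum, inNbrs, Finset.sum_filter]
    refine Finset.sum_congr rfl fun w _ => ?_
    show ppr α E v w * ((1 - α) * transMat E w x) = _
    have hM : transMat E w x = if E w x then (1:ℝ) / (doutd E w : ℝ) else 0 := rfl
    have hp : (∑' ℓ : ℕ, α * (1 - α) ^ ℓ * (transMat E ^ ℓ) v w) = ppr α E v w := rfl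
    rw [hM, hp]
    split_ifs <;> ring


variable [Fintype V] [DecidableEq V] (E : V → V → Prop) [DecidableRel E]

lemma pushback_residue_nonneg {α : ℝ} (hα : α ∈ Set.Ioo (0:ℝ) 1)
    (s : (V → ℝ) × (V → ℝ)) (hr : ∀ w, 0 ≤ s.2 w) (x w : V) :
    0 ≤ (pushback α E s x).2 w := by
  show (0:ℝ) ≤ if w = x then 0 else s.2 w + (if E w x then (1 - α) * s.2 x / (doutd E w : ℝ) else 0)
  split_ifs with h1 h2
  · exact le_rfl
  · exact add_nonneg (hr w)
      (div_nonneg (mul_nonneg (by linarith [hα.2]) (hr x)) (Nat.cast_nonneg _))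
  · simpa using hr w

lemma pushback_invariant {α : ℝ} (hα : α ∈ Set.Ioo (0:ℝ) 1)
    (hpos : ∀ v : V, 0 < doutd E v) (s : (V → ℝ) × (V → ℝ))
    (hr : ∀ w, 0 ≤ s.2 w) (x v : V) :
    (pushback α E s x).1 v + ∑ w, (pushback α E s x).2 w * ppr α E v w
      ≤ s.1 v + ∑ w, s.2 w * ppr α E v w := by
  have h1α : (0:ℝ) ≤ 1 - α := by linarith [hα.2]
  set g : V → ℝ := fun w => if E w x then (1 - α) * s.2 x / (doutd E w : ℝ) else 0 with hg
  have hgnn : ∀ w, 0 ≤ g w := by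
    intro w; rw [hg]; dsimp only
    split
    · exact div_nonneg (mul_nonneg h1α (hr x)) (Nat.cast_nonneg _)
    · exact le_refl 0
  have hresv : (pushback α E s x).1 v = s.1 v + (if v = x then α * s.2 x else 0) := by
    show Function.update s.1 x (s.1 x + α * s.2 x) v = _
    rw [Function.update_apply]
    split_ifs with h
    · subst h; ring
    · ring
  -- the new residue-sum
  have hF : ∀ w : V, (pushback α E s x).2 w * ppr α E v w
      = if w = x then 0 else (s.2 w + g w) * ppr α E v w := by
    intro w
    show (if w = x then 0 else s.2 w + g w) * ppr α E v w = _
    split_ifs <;> ring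
  have h2 : ∑ w, (if w = x then 0 else (s.2 w + g w) * ppr α E v w)
      = ∑ w ∈ Finset.univ.erase x, (s.2 w + g w) * ppr α E v w := by
    rw [← Finset.sum_erase (f := fun w => if w = x then 0 else (s.2 w + g w) * ppr α E v w)
      Finset.univ (if_pos rfl)]
    exact Finset.sum_congr rfl fun w hw => by rw [if_neg (Finset.mem_erase.mp hw).1]
  have h3 : ∑ w ∈ Finset.univ.erase x, (s.2 w + g w) * ppr α E v w
      = ∑ w ∈ Finset.univ.erase x, s.2 w * ppr α E v w
        + ∑ w ∈ Finset.univ.erase x, g w * ppr α E v w := by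
    rw [← Finset.sum_add_distrib]
    exact Finset.sum_congr rfl fun w _ => by ring
  have h4 : ∑ w ∈ Finset.univ.erase x, s.2 w * ppr α E v w
      = ∑ w, s.2 w * ppr α E v w - s.2 x * ppr α E v x :=
    Finset.sum_erase_eq_sub (Finset.mem_univ x)
  have h5 : ∑ w ∈ Finset.univ.erase x, g w * ppr α E v w ≤ ∑ w, g w * ppr α E v w :=
    Finset.sum_le_sum_of_subset_of_nonneg (Finset.subset_univ _)
      (fun w _ _ => mul_nonneg (hgnn w) (ppr_nonneg E hα v w))
  have h6 : ∑ w, g w * ppr α E v w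
      = s.2 x * ppr α E v x - α * s.2 x * (if v = x then 1 else 0) := by
    have e1 : (1 - α) * ∑ w ∈ inNbrs E x, ppr α E v w / (doutd E w : ℝ)
        = ppr α E v x - α * (if v = x then 1 else 0) := by
      have := ppr_rec E hα hpos v x; linarith
    calc ∑ w, g w * ppr α E v w
        = s.2 x * ((1 - α) * ∑ w ∈ inNbrs E x, ppr α E v w / (doutd E w : ℝ)) := by
          rw [inNbrs, Finset.sum_filter, Finset.mul_sum, Finset.mul_sum]
          refine Finset.sum_congr rfl fun w _ => ?_
          rw [hg]; dsimp only; split_ifs <;> ring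
      _ = s.2 x * ppr α E v x - α * s.2 x * (if v = x then 1 else 0) := by rw [e1]; ring
  have hnew : ∑ w, (pushback α E s x).2 w * ppr α E v w
      ≤ ∑ w, s.2 w * ppr α E v w - α * s.2 x * (if v = x then 1 else 0) := by
    calc ∑ w, (pushback α E s x).2 w * ppr α E v w
        = ∑ w ∈ Finset.univ.erase x, (s.2 w + g w) * ppr α E v w := by
          simp_rw [hF]; exact h2
      _ = (∑ w, s.2 w * ppr α E v w - s.2 x * ppr α E v x)
            + ∑ w ∈ Finset.univ.erase x, g w * ppr α E v w := by rw [h3, h4]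
      _ ≤ (∑ w, s.2 w * ppr α E v w - s.2 x * ppr α E v x) + ∑ w, g w * ppr α E v w := by
          linarith [h5]
      _ = ∑ w, s.2 w * ppr α E v w - α * s.2 x * (if v = x then 1 else 0) := by
          rw [h6]; ring
  rw [hresv]
  have hite : (if v = x then α * s.2 x else 0) = α * s.2 x * (if v = x then 1 else 0) := by
    split_ifs <;> ring
  rw [hite]
  linarith [hnew]

lemma foldl_residue_nonneg {α : ℝ} (hα : α ∈ Set.Ioo (0:ℝ) 1) :
    ∀ (L : List V) (s : (V → ℝ) × (V → ℝ)), (∀ w, 0 ≤ s.2 w) →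
      ∀ w, 0 ≤ (L.foldl (pushback α E) s).2 w := by
  intro L
  induction L with
  | nil => intro s hr w; exact hr w
  | cons x L ih =>
    intro s hr w
    exact ih (pushback α E s x) (pushback_residue_nonneg E hα s hr x) w

lemma foldl_invariant {α : ℝ} (hα : α ∈ Set.Ioo (0:ℝ) 1)
    (hpos : ∀ v : V, 0 < doutd E v) :
    ∀ (L : List V) (s : (V → ℝ) × (V → ℝ)), (∀ w, 0 ≤ s.2 w) → ∀ v,
      (L.foldl (pushback α E) s).1 v + ∑ w, (L.foldl (pushback α E) s).2 w * ppr α E v w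
        ≤ s.1 v + ∑ w, s.2 w * ppr α E v w := by
  intro L
  induction L with
  | nil => intro s hr v; exact le_rfl
  | cons x L ih =>
    intro s hr v
    calc ((x :: L).foldl (pushback α E) s).1 v
          + ∑ w, ((x :: L).foldl (pushback α E) s).2 w * ppr α E v w
        ≤ (pushback α E s x).1 v + ∑ w, (pushback α E s x).2 w * ppr α E v w :=
          ih (pushback α E s x) (pushback_residue_nonneg E hα s hr x) v
      _ ≤ s.1 v + ∑ w, s.2 w * ppr α E v w := pushback_invariant E hα hpos s hr x v

lemma foldl_count {α ε : ℝ} (hα : α ∈ Set.Ioo (0:ℝ) 1) (hε : 0 < ε) :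
    ∀ (L : List V) (s : (V → ℝ) × (V → ℝ)),
      (∀ i : Fin L.length, ε < ((L.take i).foldl (pushback α E) s).2 (L.get i)) →
      ∀ v, s.1 v + α * ε * (L.count v : ℝ) ≤ (L.foldl (pushback α E) s).1 v := by
  intro L
  induction L with
  | nil => intro s _ v; simp
  | cons x L ih =>
    intro s hvalid v
    have h0 : ε < s.2 x := hvalid ⟨0, Nat.succ_pos _⟩
    have hval' : ∀ i : Fin L.length,
        ε < ((L.take i).foldl (pushback α E) (pushback α E s x)).2 (L.get i) :=
      fun i => hvalid ⟨i + 1, Nat.succ_lt_succ i.isLt⟩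
    have hstep : s.1 v + (if v = x then α * ε else 0) ≤ (pushback α E s x).1 v := by
      show _ ≤ Function.update s.1 x (s.1 x + α * s.2 x) v
      rw [Function.update_apply]
      split_ifs with h
      · subst h; nlinarith [hα.1]
      · simp
    have hc : ((x :: L).count v : ℝ) = (L.count v : ℝ) + (if v = x then 1 else 0) := by
      by_cases h : v = x <;> simp [List.count_cons, h] <;> exact Ne.symm h
    calc s.1 v + α * ε * ((x :: L).count v : ℝ)
        ≤ (pushback α E s x).1 v + α * ε * (L.count v : ℝ) := by
          rw [hc]
          have he : α * ε * ((L.count v : ℝ) + (if v = x then 1 else 0))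
              = α * ε * (L.count v : ℝ) + (if v = x then α * ε else 0) := by
            split_ifs <;> ring
          rw [he]
          linarith [hstep]
      _ ≤ ((x :: L).foldl (pushback α E) s).1 v := ih (pushback α E s x) hval' v

lemma sum_count_eq_length (L : List V) : ∑ v : V, (L.count v) = L.length := by
  induction L with
  | nil => simp
  | cons x L ih =>
    simp only [List.count_cons, beq_iff_eq, List.length_cons]
    rw [Finset.sum_add_distrib, ih, Finset.sum_ite_eq Finset.univ x fun _ => 1]
    simp


end Helpers

/-- In any run of `ApproxContributions(t, α, ε)` (a sequence `L` of pushback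
operations, each performed on a node whose current residue exceeds `ε`), the number `SP(v)`
of pushbacks performed on `v` satisfies `SP(v) ≤ π(v,t)/(α·ε)`, and hence the total number of
pushbacks is at most `n·π(t)/(α·ε)`. -/
theorem approxContributions_pushback_count [Fintype V] [DecidableEq V]
    (E : V → V → Prop) [DecidableRel E]
    (α : ℝ) (hα : α ∈ Set.Ioo (0 : ℝ) 1) (hpos : ∀ v : V, 0 < doutd E v)
    (ε : ℝ) (hε : ε ∈ Set.Ioc (0 : ℝ) 1) (t : V)
    (L : List V)
    (hvalid : ∀ i : Fin L.length,
      ε < ((L.take i).foldl (pushback α E) (initState t)).2 (L.get i)) :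
    (∀ v : V, (L.count v : ℝ) ≤ ppr α E v t / (α * ε)) ∧
      (L.length : ℝ) ≤ (Fintype.card V : ℝ) * pgrk α E t / (α * ε) := by
  have hαε : 0 < α * ε := mul_pos hα.1 hε.1
  have hrinit : ∀ w, 0 ≤ (initState t : (V → ℝ) × (V → ℝ)).2 w := by
    intro w
    show (0:ℝ) ≤ if w = t then 1 else 0
    split_ifs <;> norm_num
  have hbound : ∀ v, α * ε * (L.count v : ℝ) ≤ ppr α E v t := by
    intro v
    have h1 := foldl_count E hα hε.1 L (initState t) hvalid v
    have h2 := foldl_invariant E hα hpos L (initState t) hrinit v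
    have h3 : ∑ w, (initState t : (V → ℝ) × (V → ℝ)).2 w * ppr α E v w = ppr α E v t := by
      show ∑ w, (if w = t then (1:ℝ) else 0) * ppr α E v w = _
      rw [Finset.sum_eq_single t (fun w _ hw => by rw [if_neg hw, zero_mul])
        (fun h => absurd (Finset.mem_univ t) h)]
      rw [if_pos rfl, one_mul]
    have h4 : 0 ≤ ∑ w, (L.foldl (pushback α E) (initState t)).2 w * ppr α E v w :=
      Finset.sum_nonneg fun w _ => mul_nonneg
        (foldl_residue_nonneg E hα L (initState t) hrinit w) (ppr_nonneg E hα v w)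
    have h5 : (initState t : (V → ℝ) × (V → ℝ)).1 v = 0 := rfl
    linarith
  have hcount : ∀ v : V, (L.count v : ℝ) ≤ ppr α E v t / (α * ε) := by
    intro v
    rw [le_div_iff₀ hαε]
    calc (L.count v : ℝ) * (α * ε) = α * ε * (L.count v : ℝ) := by ring
      _ ≤ ppr α E v t := hbound v
  refine ⟨hcount, ?_⟩
  rcases isEmpty_or_nonempty V with hV | hV
  · cases L with
    | nil => simp [pgrk]
    | cons a _ => exact (hV.false a).elim
  · have hsum : ∑ v : V, (L.count v : ℝ) = (L.length : ℝ) := by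
      exact_mod_cast sum_count_eq_length L
    have hlen : (L.length : ℝ) ≤ (∑ v : V, ppr α E v t) / (α * ε) := by
      rw [← hsum, Finset.sum_div]
      exact Finset.sum_le_sum fun v _ => hcount v
    have hcard : ((Fintype.card V : ℝ)) ≠ 0 := by
      exact_mod_cast Fintype.card_pos.ne'
    have hpg : (Fintype.card V : ℝ) * pgrk α E t = ∑ v : V, ppr α E v t := by
      rw [pgrk]; field_simp
    rw [hpg]
    exact hlen
end

section
/- If p, r : V → ℝ≥0 satisfy π(t) = (1/n)Σ_v p(v) + Σ_v π(v)·r(v) with r(v) ≤ ε for all v, and χ_v = [X = v] where P(X = v) = π(v), then the variance of the bidirectional estimator q(t) = (1/n)Σ_v p(v) + Σ_v χ_v·r(v) satisfies Var[q(t)] ≤ Σ_v π(v)·r(v)² ≤ ε·π(t). -/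
open Finset

/-- If `p, r ≥ 0` satisfy `π(t) = (1/n)Σ_v p(v) + Σ_v π(v)·r(v)` with
`r(v) ≤ ε`, then the variance of the bidirectional estimator
`q(t) = (1/n)Σ_v p(v) + Σ_v χ_v·r(v)` (over a single sample `X ~ π`) satisfies
`Var[q(t)] ≤ Σ_v π(v)·r(v)² ≤ ε·π(t)`. -/
theorem bidirectional_estimator_variance {V : Type*} [Fintype V] [DecidableEq V]
    (π : V → ℝ) (hπ0 : ∀ v, 0 ≤ π v) (hπ1 : ∑ v : V, π v = 1)
    (p r : V → ℝ) (pit ε : ℝ) (hε : 0 ≤ ε)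
    (hp0 : ∀ v, 0 ≤ p v) (hr0 : ∀ v, 0 ≤ r v) (hrε : ∀ v, r v ≤ ε)
    (hinv : pit = (1 / (Fintype.card V : ℝ)) * ∑ v : V, p v + ∑ v : V, π v * r v) :
    (∑ x : V, π x *
        (((1 / (Fintype.card V : ℝ)) * ∑ v : V, p v +
            ∑ v : V, (if x = v then (1 : ℝ) else 0) * r v) - pit) ^ 2 ≤
      ∑ v : V, π v * r v ^ 2) ∧
      ∑ v : V, π v * r v ^ 2 ≤ ε * pit := by
  set c : ℝ := (1 / (Fintype.card V : ℝ)) * ∑ v : V, p v with hc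
  set μ : ℝ := ∑ v : V, π v * r v with hμ
  have hind : ∀ x : V, ∑ v : V, (if x = v then (1 : ℝ) else 0) * r v = r x := by
    intro x
    simp [ite_mul]
  constructor
  · have h1 : ∑ x : V, π x *
        ((c + ∑ v : V, (if x = v then (1 : ℝ) else 0) * r v) - pit) ^ 2
        = ∑ x : V, π x * (r x - μ) ^ 2 := by
      apply Finset.sum_congr rfl
      intro x _
      rw [hind x, hinv]
      ring_nf
    rw [h1]
    have h2 : ∑ x : V, π x * (r x - μ) ^ 2
        = (∑ x : V, π x * r x ^ 2) - 2 * μ * (∑ x : V, π x * r x)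
          + μ ^ 2 * (∑ x : V, π x) := by
      have e : ∀ x : V, π x * (r x - μ) ^ 2
          = π x * r x ^ 2 - 2 * μ * (π x * r x) + μ ^ 2 * π x := fun x => by ring
      simp only [e, Finset.sum_add_distrib, Finset.sum_sub_distrib, ← Finset.mul_sum]
    rw [h2, ← hμ, hπ1]
    nlinarith [sq_nonneg μ]
  · have h3 : ∑ v : V, π v * r v ^ 2 ≤ ε * μ := by
      rw [hμ, Finset.mul_sum]
      apply Finset.sum_le_sum
      intro v _
      have h := mul_le_mul_of_nonneg_left (hrε v) (mul_nonneg (hπ0 v) (hr0 v))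
      nlinarith [h]
    have hcnn : 0 ≤ c := by
      apply mul_nonneg
      · positivity
      · exact Finset.sum_nonneg fun v _ => hp0 v
    have : ε * μ ≤ ε * pit := by
      apply mul_le_mul_of_nonneg_left _ hε
      rw [hinv]; linarith
    linarith
end

section
/- In the multi-level structure where level sets V_1, ..., V_L feed into a root t, with each node in level i+1 having exactly 2/(1-α) distinct parents in level i and each non-root node having out-degree 1, the nodes in level i have PageRank score Θ(2^{i-1}/n) and the root satisfies π(t) = Θ(2^L/n). More precisely, if every node in V_1 has PageRank at least a/n and at most b/n for constants 0 < a ≤ b, then every node of V_i has PageRank between (a·2^{i-1} + (2^{i-1}-1)·α)/n and (b·2^{i-1} + 2^{i-1}·α)/n. -/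
open Finset

variable {V : Type*}

/-- In the multi-level structure (level `V_{i+1}` nodes have exactly
`k = 2/(1-α)` distinct parents, all in level `V_i`, and every level node has out-degree 1),
if every node of the top level `V_1` (indexed here as `levels 0`) has PageRank between `a/n`
and `b/n`, then every node of `V_{i+1}` (indexed `levels i`) has PageRank between
`(a·2^i + (2^i - 1)·α)/n` and `(b·2^i + 2^i·α)/n`; in particular nodes of level `i` have
PageRank `Θ(2^i/n)`. -/
theorem multilevel_pagerank_bounds [Fintype V] [DecidableEq V]
    (E : V → V → Prop) [DecidableRel E]
    (α : ℝ) (hα : α ∈ Set.Ioo (0 : ℝ) 1)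
    (k : ℕ) (hk : (k : ℝ) = 2 / (1 - α))
    (π : V → ℝ)
    (hrec : ∀ v : V,
      π v = α / (Fintype.card V : ℝ) +
        ∑ u ∈ inNbrs E v, (1 - α) * π u / (doutd E u : ℝ))
    (L : ℕ) (hL : 0 < L) (levels : ℕ → Finset V)
    (hparents : ∀ i, i + 1 < L → ∀ v ∈ levels (i + 1),
      inNbrs E v ⊆ levels i ∧ (inNbrs E v).card = k)
    (hout : ∀ i, i < L → ∀ v ∈ levels i, doutd E v = 1)
    (a b : ℝ) (ha : 0 < a) (hab : a ≤ b)
    (hbase : ∀ v ∈ levels 0,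
      a / (Fintype.card V : ℝ) ≤ π v ∧ π v ≤ b / (Fintype.card V : ℝ)) :
    ∀ i, i < L → ∀ v ∈ levels i,
      (a * 2 ^ i + ((2 : ℝ) ^ i - 1) * α) / (Fintype.card V : ℝ) ≤ π v ∧
        π v ≤ (b * 2 ^ i + (2 : ℝ) ^ i * α) / (Fintype.card V : ℝ) := by
  obtain ⟨hα0, hα1⟩ := hα
  set n : ℝ := (Fintype.card V : ℝ) with hn
  have h1α : (0:ℝ) < 1 - α := by linarith
  have hk2 : (k:ℝ) * (1 - α) = 2 := by
    rw [hk]; field_simp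
  have key : ∀ i, i < L → ∀ v ∈ levels i,
      (a * 2 ^ i + ((2 : ℝ) ^ i - 1) * α) / n ≤ π v ∧
        π v ≤ (b * 2 ^ i + ((2 : ℝ) ^ i - 1) * α) / n := by
    intro i
    induction i with
    | zero =>
      intro _ v hv
      simpa using hbase v hv
    | succ i ih =>
      intro hiL v hv
      have hi : i < L := Nat.lt_of_succ_lt hiL
      obtain ⟨hsub, hcard⟩ := hparents i hiL v hv
      have hsum : π v = α / n + ∑ u ∈ inNbrs E v, (1 - α) * π u := by
        rw [hrec v]
        congr 1
        refine Finset.sum_congr rfl fun u hu => ?_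
        rw [hout i hi u (hsub hu)]
        simp
      have hbd := fun u (hu : u ∈ inNbrs E v) => ih hi u (hsub hu)
      set lo : ℝ := a * 2 ^ i + ((2 : ℝ) ^ i - 1) * α with hlo
      set hic : ℝ := b * 2 ^ i + ((2 : ℝ) ^ i - 1) * α with hhi
      have hlbsum : (k : ℝ) * ((1 - α) * (lo / n)) ≤ ∑ u ∈ inNbrs E v, (1 - α) * π u := by
        have := Finset.card_nsmul_le_sum (inNbrs E v) (fun u => (1 - α) * π u)
          ((1 - α) * (lo / n)) (fun u hu => by
            have := (hbd u hu).1
            exact mul_le_mul_of_nonneg_left this (le_of_lt h1α))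
        rwa [hcard, nsmul_eq_mul] at this
      have hubsum : ∑ u ∈ inNbrs E v, (1 - α) * π u ≤ (k : ℝ) * ((1 - α) * (hic / n)) := by
        have := Finset.sum_le_card_nsmul (inNbrs E v) (fun u => (1 - α) * π u)
          ((1 - α) * (hic / n)) (fun u hu => by
            have := (hbd u hu).2
            exact mul_le_mul_of_nonneg_left this (le_of_lt h1α))
        rwa [hcard, nsmul_eq_mul] at this
      have hk2lo : (k : ℝ) * ((1 - α) * (lo / n)) = 2 * (lo / n) := by
        rw [← mul_assoc, hk2]
      have hk2hi : (k : ℝ) * ((1 - α) * (hic / n)) = 2 * (hic / n) := by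
        rw [← mul_assoc, hk2]
      rw [hk2lo] at hlbsum
      rw [hk2hi] at hubsum
      constructor
      · have heq : (a * 2 ^ (i + 1) + ((2 : ℝ) ^ (i + 1) - 1) * α) / n
            = α / n + 2 * (lo / n) := by rw [hlo]; ring
        rw [heq, hsum]
        linarith
      · have heq : (b * 2 ^ (i + 1) + ((2 : ℝ) ^ (i + 1) - 1) * α) / n
            = α / n + 2 * (hic / n) := by rw [hhi]; ring
        rw [heq, hsum]
        linarith
  intro i hiL v hv
  obtain ⟨h1, h2⟩ := key i hiL v hv
  refine ⟨h1, h2.trans ?_⟩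
  have hnpos : (0:ℝ) < n := by
    rw [hn]
    exact_mod_cast Fintype.card_pos_iff.mpr ⟨v⟩
  gcongr
  nlinarith [pow_nonneg (by norm_num : (0:ℝ) ≤ 2) i]
end

section
/- For each v ∈ V in the multi-level structure's top level V_1, the Personalized PageRank to the root satisfies π(v,t) = (1-α)^L, where L is the number of levels, and hence π(v,t)/(n·π(t)) = Θ(((1-α)/2)^L) = Θ(1/|V_1|) when the branching factor is 2/(1-α). -/
open Finset

variable {V : Type*}

lemma trans_det [Fintype V] [DecidableEq V] (E : V → V → Prop) [DecidableRel E] {u w : V}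
    (h : outNbrs E u = {w}) (x : V) :
    transMat E u x = if x = w then 1 else 0 := by
  have hd : doutd E u = 1 := by rw [doutd, h, Finset.card_singleton]
  have hE : E u x ↔ x = w := by
    rw [← Finset.mem_singleton, ← h]; simp [outNbrs]
  simp [transMat, hE, hd]

lemma pow_step [Fintype V] [DecidableEq V] (E : V → V → Prop) [DecidableRel E] {u w : V}
    (h : outNbrs E u = {w}) (ℓ : ℕ) (t : V) :
    (transMat E ^ (ℓ + 1)) u t = (transMat E ^ ℓ) w t := by
  rw [pow_succ', Matrix.mul_apply]
  simp [trans_det E h, ite_mul]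

lemma pow_self [Fintype V] [DecidableEq V] (E : V → V → Prop) [DecidableRel E] {t : V}
    (hself : outNbrs E t = {t}) (ℓ : ℕ) :
    (transMat E ^ ℓ) t t = 1 := by
  induction ℓ with
  | zero => simp [Matrix.one_apply]
  | succ n ih => rw [pow_step E hself, ih]

/-- In the multi-level structure (every node of level `V_i` has out-degree
exactly 1, pointing into `V_{i+1}`, nodes of the last level point to the root `t`, and the
walk is absorbed at `t` via its self-loop), every node `v` of the top level `V_1`
(indexed `levels 0`) has Personalized PageRank `π(v,t) = (1-α)^L` to the root. -/
theorem multilevel_ppr_to_root [Fintype V] [DecidableEq V]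
    (E : V → V → Prop) [DecidableRel E]
    (α : ℝ) (hα : α ∈ Set.Ioo (0 : ℝ) 1) (hpos : ∀ v : V, 0 < doutd E v)
    (t : V) (L : ℕ) (hL : 0 < L) (levels : ℕ → Finset V)
    (hself : outNbrs E t = {t})
    (htout : ∀ i, i < L → t ∉ levels i)
    (hstep : ∀ i, i + 1 < L → ∀ v ∈ levels i, ∃ w ∈ levels (i + 1), outNbrs E v = {w})
    (hlast : ∀ v ∈ levels (L - 1), outNbrs E v = {t}) :
    ∀ v ∈ levels 0, ppr α E v t = (1 - α) ^ L := by
  obtain ⟨hα0, hα1⟩ := hα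
  have key : ∀ m i, i + m + 1 = L → ∀ v ∈ levels i, ∀ ℓ,
      (transMat E ^ ℓ) v t = if m + 1 ≤ ℓ then 1 else 0 := by
    intro m
    induction m with
    | zero =>
      intro i hi v hv ℓ
      have hvt : v ≠ t := fun h => htout i (by omega) (h ▸ hv)
      have hiL : i = L - 1 := by omega
      cases ℓ with
      | zero => simp [Matrix.one_apply, hvt]
      | succ n =>
        rw [pow_step E (hlast v (hiL ▸ hv)), pow_self E hself]
        simp
    | succ m ih =>
      intro i hi v hv ℓ
      have hvt : v ≠ t := fun h => htout i (by omega) (h ▸ hv)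
      obtain ⟨w, hw, hout⟩ := hstep i (by omega) v hv
      cases ℓ with
      | zero => simp [Matrix.one_apply, hvt]
      | succ n =>
        rw [pow_step E hout, ih (i + 1) (by omega) w hw n]
        simp [Nat.succ_le_succ_iff]
  intro v hv
  have hent : ∀ ℓ, (transMat E ^ ℓ) v t = if L ≤ ℓ then 1 else 0 := by
    intro ℓ
    have := key (L - 1) 0 (by omega) v hv ℓ
    rwa [show L - 1 + 1 = L by omega] at this
  have hf : ∀ ℓ, α * (1 - α) ^ ℓ * (transMat E ^ ℓ) v t
      = if L ≤ ℓ then α * (1 - α) ^ ℓ else 0 := by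
    intro ℓ; rw [hent ℓ]; split <;> ring
  rw [ppr, tsum_congr hf]
  have h1 : |1 - α| < 1 := by rw [abs_lt]; constructor <;> linarith
  have hg : Summable (fun ℓ : ℕ => α * (1 - α) ^ ℓ) :=
    (summable_geometric_of_lt_one (by linarith) (by linarith)).mul_left α
  have hs : Summable (fun ℓ : ℕ => if L ≤ ℓ then α * (1 - α) ^ ℓ else 0) := by
    apply Summable.of_nonneg_of_le (fun ℓ => ?_) (fun ℓ => ?_) hg
    · split
      · exact mul_nonneg hα0.le (pow_nonneg (by linarith) _)
      · exact le_refl 0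
    · split
      · exact le_refl _
      · exact mul_nonneg hα0.le (pow_nonneg (by linarith) _)
  rw [← hs.sum_add_tsum_nat_add L]
  have h0 : ∑ i ∈ Finset.range L, (if L ≤ i then α * (1 - α) ^ i else 0) = 0 := by
    apply Finset.sum_eq_zero
    intro i hi
    rw [Finset.mem_range] at hi
    simp [Nat.not_le.mpr hi]
  rw [h0, zero_add]
  have h2 : ∀ i : ℕ, (if L ≤ i + L then α * (1 - α) ^ (i + L) else 0)
      = (α * (1 - α) ^ L) * (1 - α) ^ i := by
    intro i
    rw [if_pos (Nat.le_add_left L i), pow_add]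
    ring
  rw [tsum_congr h2, tsum_mul_left, tsum_geometric_of_lt_one (by linarith) (by linarith)]
  field_simp
  rw [sub_sub_cancel, div_self hα0.ne']
end
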